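/- Let k, q, p ∈ ℕ with q ≤ k. Then the number of partitions with k parts (no bound on part size), of size p and trace q, equals the sum over all pairs (a,b) ∈ ℕ×ℕ with q² + a + b = p of the product: (number of partitions with k−q parts fitting in a (k−q)×q box, of size a) × (number of partitions with q parts, of any size of parts, of total size b). (This is the combinatorial content of the formula for rank_{M₂} H^{p,q}(Gr_k(ℝ^{∞,1})).) -/

import Mathlib

open Finset

lemma myCardFilterGe (k r : ℕ) (hr : r ≤ k) :
    (univ.filter (fun i : Fin k => r ≤ (i : ℕ))).card = k - r := by
  have h : (univ.filter (fun i : Fin k => r ≤ (i : ℕ))) =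
      Finset.map ⟨fun j : Fin (k - r) => (⟨r + j, by have := j.2; omega⟩ : Fin k), by
        intro a b hab; simpa [Fin.ext_iff] using hab⟩ univ := by
    ext i
    simp only [mem_filter, mem_univ, true_and, mem_map, Function.Embedding.coeFn_mk,
      Fin.ext_iff]
    constructor
    · intro hi
      exact ⟨⟨(i : ℕ) - r, by have := i.2; omega⟩, by show r + ((i : ℕ) - r) = (i : ℕ); omega⟩
    · rintro ⟨j, h⟩; change r + (j : ℕ) = (i : ℕ) at h; omega
  rw [h, Finset.card_map, Finset.card_univ, Fintype.card_fin]

lemma myTraceIff {k q : ℕ} (hqk : q ≤ k) (l : Fin k → ℕ) (hm : Monotone l) :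
    (univ.filter (fun i : Fin k => k ≤ l i + (i : ℕ))).card = q ↔
      ∀ i : Fin k, (k ≤ l i + (i : ℕ) ↔ k - q ≤ (i : ℕ)) := by
  constructor
  · intro hcard i
    constructor
    · intro hi
      have hsub : (univ.filter (fun j : Fin k => (i : ℕ) ≤ (j : ℕ))) ⊆
          (univ.filter (fun j : Fin k => k ≤ l j + (j : ℕ))) := by
        intro j hj
        simp only [mem_filter, mem_univ, true_and] at hj ⊢
        have : l i ≤ l j := hm (by exact hj)
        omega
      have hc := Finset.card_le_card hsub
      rw [myCardFilterGe k (i : ℕ) (le_of_lt i.2), hcard] at hc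
      have := i.2; omega
    · intro hi
      by_contra hni
      have hsub : (univ.filter (fun j : Fin k => k ≤ l j + (j : ℕ))) ⊆
          (univ.filter (fun j : Fin k => (i : ℕ) + 1 ≤ (j : ℕ))) := by
        intro j hj
        simp only [mem_filter, mem_univ, true_and] at hj ⊢
        by_contra hji
        have : l j ≤ l i := hm (by show (j : ℕ) ≤ (i : ℕ); omega)
        omega
      have hc := Finset.card_le_card hsub
      rw [myCardFilterGe k ((i : ℕ) + 1) i.2, hcard] at hc
      have := i.2; omega
  · intro hiff
    have h : (univ.filter (fun i : Fin k => k ≤ l i + (i : ℕ))) =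
        (univ.filter (fun i : Fin k => k - q ≤ (i : ℕ))) := by
      apply filter_congr; intro i _; simp only [hiff i]
    rw [h, myCardFilterGe k (k - q) (Nat.sub_le k q)]
    omega

lemma mySumSplit {k q : ℕ} (hqk : q ≤ k) (l : Fin k → ℕ) :
    ∑ i, l i = (∑ i : Fin (k - q), l (Fin.castLE (Nat.sub_le k q) i)) +
      ∑ i : Fin q, l ⟨k - q + (i : ℕ), by have := i.2; omega⟩ := by
  have hk : (k - q) + q = k := by omega
  rw [← Fintype.sum_equiv (finCongr hk) (fun i => l (finCongr hk i)) l (fun i => rfl)]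
  rw [Fin.sum_univ_add]
  congr 1

lemma myTopGe {k q : ℕ} (hqk : q ≤ k) (l : Fin k → ℕ) (hm : Monotone l)
    (hiff : ∀ i : Fin k, (k ≤ l i + (i : ℕ) ↔ k - q ≤ (i : ℕ))) :
    ∀ i : Fin k, k - q ≤ (i : ℕ) → q ≤ l i := by
  intro i hi
  rcases Nat.eq_zero_or_pos q with hq | hq
  · omega
  · have hkq : k - q < k := by have := i.2; omega
    have hj := (hiff ⟨k - q, hkq⟩).mpr (by simp)
    have hle : l ⟨k - q, hkq⟩ ≤ l i := hm (show (k - q : ℕ) ≤ (i : ℕ) from hi)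
    simp only [] at hj
    omega

lemma myBotLe {k q : ℕ} (hqk : q ≤ k) (l : Fin k → ℕ) (hm : Monotone l)
    (hiff : ∀ i : Fin k, (k ≤ l i + (i : ℕ) ↔ k - q ≤ (i : ℕ))) :
    ∀ i : Fin k, (i : ℕ) < k - q → l i ≤ q := by
  intro i hi
  have hkq : k - q - 1 < k := by omega
  have hj : ¬ (k ≤ l ⟨k - q - 1, hkq⟩ + (k - q - 1)) := by
    intro hc
    have := (hiff ⟨k - q - 1, hkq⟩).mp hc
    simp only [] at this
    omega
  have hle : l i ≤ l ⟨k - q - 1, hkq⟩ := hm (show (i : ℕ) ≤ k - q - 1 by omega)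
  omega

lemma myFinite (k p : ℕ) (P : (Fin k → ℕ) → Prop) (hP : ∀ l, P l → (∑ i, l i) = p) :
    Finite {l : Fin k → ℕ // P l} := by
  apply Finite.of_injective (β := Fin k → Fin (p + 1)) (fun l i => ⟨l.1 i, by
    have h1 := Finset.single_le_sum (f := l.1) (fun j _ => Nat.zero_le _) (Finset.mem_univ i)
    have h2 := hP l.1 l.2
    omega⟩)
  intro a b hab
  apply Subtype.ext; funext i
  simpa [Fin.ext_iff] using congrFun hab i


section Glue

variable {k q : ℕ} (hqk : q ≤ k) (mu : Fin (k - q) → ℕ) (nu : Fin q → ℕ)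

def glue : Fin k → ℕ := fun i =>
  if h : (i : ℕ) < k - q then mu ⟨i, h⟩
  else nu ⟨(i : ℕ) - (k - q), by have := i.2; omega⟩ + q

lemma glue_lt (i : Fin k) (h : (i : ℕ) < k - q) : glue hqk mu nu i = mu ⟨i, h⟩ :=
  dif_pos h

lemma glue_ge (i : Fin k) (h : k - q ≤ (i : ℕ)) :
    glue hqk mu nu i = nu ⟨(i : ℕ) - (k - q), by have := i.2; omega⟩ + q :=
  dif_neg (by omega)

lemma glue_top (i : Fin q) (pf : k - q + (i : ℕ) < k) :
    glue hqk mu nu ⟨k - q + (i : ℕ), pf⟩ = nu i + q := by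
  rw [glue_ge hqk mu nu _ (by simp)]
  congr 2
  apply Fin.ext
  simp

lemma glue_mono (hm : Monotone mu) (hb : ∀ i, mu i ≤ q) (hn : Monotone nu) :
    Monotone (glue hqk mu nu) := by
  intro i j hij
  have hij' : (i : ℕ) ≤ (j : ℕ) := hij
  by_cases h1 : (i : ℕ) < k - q <;> by_cases h2 : (j : ℕ) < k - q
  · rw [glue_lt hqk mu nu i h1, glue_lt hqk mu nu j h2]
    exact hm (show ((⟨i, h1⟩ : Fin (k - q))) ≤ ⟨j, h2⟩ from hij')
  · rw [glue_lt hqk mu nu i h1, glue_ge hqk mu nu j (by omega)]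
    exact le_trans (hb _) (Nat.le_add_left q _)
  · omega
  · rw [glue_ge hqk mu nu i (by omega), glue_ge hqk mu nu j (by omega)]
    exact Nat.add_le_add_right
      (hn (show (i : ℕ) - (k - q) ≤ (j : ℕ) - (k - q) from by omega)) q

lemma glue_sum : ∑ i, glue hqk mu nu i = (∑ i, mu i) + ((∑ i, nu i) + q * q) := by
  rw [mySumSplit hqk]
  congr 1
  · exact Finset.sum_congr rfl fun i _ => glue_lt hqk mu nu _ i.2
  · rw [Finset.sum_congr rfl (fun (i : Fin q) _ =>
      glue_top hqk mu nu i (by have := i.2; omega)), Finset.sum_add_distrib,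
      Finset.sum_const, Finset.card_univ, Fintype.card_fin, smul_eq_mul]

lemma glue_trace (hb : ∀ i, mu i ≤ q) :
    ∀ i : Fin k, (k ≤ glue hqk mu nu i + (i : ℕ) ↔ k - q ≤ (i : ℕ)) := by
  intro i
  by_cases h : (i : ℕ) < k - q
  · rw [glue_lt hqk mu nu i h]
    have := hb ⟨i, h⟩
    constructor <;> intro <;> omega
  · rw [glue_ge hqk mu nu i (by omega)]
    have := i.2
    constructor <;> intro <;> omega

end Glue

def myEquiv (k q p : ℕ) (ab : ℕ × ℕ) (hqk : q ≤ k) (hab : q ^ 2 + ab.1 + ab.2 = p) :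
    {l : {l : Fin k → ℕ // Monotone l ∧ (∑ i, l i) = p ∧
        (Finset.univ.filter (fun i : Fin k => k ≤ l i + (i : ℕ))).card = q} //
      ((∑ i : Fin (k - q), l.1 (Fin.castLE (Nat.sub_le k q) i)),
       (∑ i : Fin q, (l.1 ⟨k - q + (i : ℕ), by have := i.2; omega⟩ - q))) = ab} ≃
    {l : Fin (k - q) → ℕ // Monotone l ∧ (∀ i, l i ≤ q) ∧ (∑ i, l i) = ab.1} ×
    {l : Fin q → ℕ // Monotone l ∧ (∑ i, l i) = ab.2} where
  toFun x :=
    (⟨fun i => x.1.1 (Fin.castLE (Nat.sub_le k q) i), by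
      have hiff := (myTraceIff hqk x.1.1 x.1.2.1).mp x.1.2.2.2
      refine ⟨fun i j hij => x.1.2.1 ?_, fun i => ?_, ?_⟩
      · exact hij
      · exact myBotLe hqk x.1.1 x.1.2.1 hiff _ i.2
      · have h := x.2
        rw [Prod.ext_iff] at h
        exact h.1⟩,
     ⟨fun i => x.1.1 ⟨k - q + (i : ℕ), by have := i.2; omega⟩ - q, by
      refine ⟨fun i j hij => ?_, ?_⟩
      · refine Nat.sub_le_sub_right (x.1.2.1 ?_) q
        show (k - q + (i : ℕ)) ≤ k - q + (j : ℕ)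
        have : (i : ℕ) ≤ (j : ℕ) := hij
        omega
      · have h := x.2
        rw [Prod.ext_iff] at h
        exact h.2⟩)
  invFun y :=
    ⟨⟨glue hqk y.1.1 y.2.1, glue_mono hqk y.1.1 y.2.1 y.1.2.1 y.1.2.2.1 y.2.2.1, by
      rw [glue_sum hqk y.1.1 y.2.1, y.1.2.2.2, y.2.2.2]
      have hab' : q * q + ab.1 + ab.2 = p := by rw [← sq]; exact hab
      omega, (myTraceIff hqk _
        (glue_mono hqk y.1.1 y.2.1 y.1.2.1 y.1.2.2.1 y.2.2.1)).mpr
        (glue_trace hqk y.1.1 y.2.1 y.1.2.2.1)⟩, by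
      have h1 : (∑ i : Fin (k - q), glue hqk y.1.1 y.2.1 (Fin.castLE (Nat.sub_le k q) i))
          = ab.1 := by
        rw [Finset.sum_congr rfl (fun (i : Fin (k - q)) _ =>
          glue_lt hqk y.1.1 y.2.1 _ i.2)]
        exact y.1.2.2.2
      have h2 : (∑ i : Fin q, (glue hqk y.1.1 y.2.1
          ⟨k - q + (i : ℕ), by have := i.2; omega⟩ - q)) = ab.2 := by
        rw [Finset.sum_congr rfl (fun (i : Fin q) _ => by
          rw [glue_top hqk y.1.1 y.2.1 i (by have := i.2; omega), Nat.add_sub_cancel])]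
        exact y.2.2.2
      rw [Prod.ext_iff]
      exact ⟨h1, h2⟩⟩
  left_inv x := by
    apply Subtype.ext
    apply Subtype.ext
    funext i
    have hiff := (myTraceIff hqk x.1.1 x.1.2.1).mp x.1.2.2.2
    show glue hqk _ _ i = x.1.1 i
    by_cases h : (i : ℕ) < k - q
    · rw [glue_lt hqk _ _ i h]
      rfl
    · rw [glue_ge hqk _ _ i (by omega)]
      show x.1.1 ⟨k - q + ((i : ℕ) - (k - q)), _⟩ - q + q = x.1.1 i
      rw [show (⟨k - q + ((i : ℕ) - (k - q)), by have := i.2; omega⟩ : Fin k) = i from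
        Fin.ext (by simp; omega)]
      exact Nat.sub_add_cancel (myTopGe hqk x.1.1 x.1.2.1 hiff i (by omega))
  right_inv y := by
    apply Prod.ext
    · apply Subtype.ext
      funext i
      show glue hqk _ _ (Fin.castLE (Nat.sub_le k q) i) = y.1.1 i
      rw [glue_lt hqk _ _ _ i.2]
      rfl
    · apply Subtype.ext
      funext i
      show glue hqk _ _ ⟨k - q + (i : ℕ), _⟩ - q = y.2.1 i
      rw [glue_top hqk _ _ i (by have := i.2; omega), Nat.add_sub_cancel]

/-- Number of partitions with `k` parts fitting in a `k × m` box, of size `p`. -/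
noncomputable def partCountSize (p k m : ℕ) : ℕ :=
  Nat.card {l : Fin k → ℕ // Monotone l ∧ (∀ i, l i ≤ m) ∧ (∑ i, l i) = p}

/-- Number of partitions with `k` parts (no bound on part size), of size `p`. -/
noncomputable def partCountSizeUnbounded (p k : ℕ) : ℕ :=
  Nat.card {l : Fin k → ℕ // Monotone l ∧ (∑ i, l i) = p}

/-- Number of partitions with `k` parts (no bound on part size), of size `p`
and trace `t`. -/
noncomputable def partCountTraceUnbounded (p k t : ℕ) : ℕ :=
  Nat.card {l : Fin k → ℕ // Monotone l ∧ (∑ i, l i) = p ∧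
    (Finset.univ.filter (fun i : Fin k => k ≤ l i + (i : ℕ))).card = t}

set_option maxHeartbeats 1000000 in
/-- Corner decomposition for unbounded partitions: the combinatorial content of the
formula for `rank_{M₂} H^{p,q}(Gr_k(ℝ^{∞,1}))`. -/
theorem partCountTraceUnbounded_corner_decomposition (k q p : ℕ) (hqk : q ≤ k) :
    partCountTraceUnbounded p k q =
      ∑ ab ∈ (Finset.range (p + 1) ×ˢ Finset.range (p + 1)).filter
          (fun ab => q ^ 2 + ab.1 + ab.2 = p),
        partCountSize ab.1 (k - q) q * partCountSizeUnbounded ab.2 q := by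
  classical
  set T := {l : Fin k → ℕ // Monotone l ∧ (∑ i, l i) = p ∧
    (Finset.univ.filter (fun i : Fin k => k ≤ l i + (i : ℕ))).card = q} with hT
  haveI : Finite T := myFinite k p _ (fun l hl => hl.2.1)
  haveI : Fintype T := Fintype.ofFinite T
  set S := (Finset.range (p + 1) ×ˢ Finset.range (p + 1)).filter
    (fun ab => q ^ 2 + ab.1 + ab.2 = p) with hS
  set g : T → ℕ × ℕ := fun l =>
    ((∑ i : Fin (k - q), l.1 (Fin.castLE (Nat.sub_le k q) i)),
     (∑ i : Fin q, (l.1 ⟨k - q + (i : ℕ), by have := i.2; omega⟩ - q))) with hg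
  have hkey : ∀ l : T, q ^ 2 + (g l).1 + (g l).2 = p := by
    rintro ⟨l, hm, hs, ht⟩
    have hiff := (myTraceIff hqk l hm).mp ht
    have htop : ∀ i : Fin q, q ≤ l ⟨k - q + (i : ℕ), by have := i.2; omega⟩ :=
      fun i => myTopGe hqk l hm hiff _ (by simp)
    have hsplit := mySumSplit hqk l
    have h2 : (∑ i : Fin q, l ⟨k - q + (i : ℕ), by have := i.2; omega⟩)
        = (∑ i : Fin q, (l ⟨k - q + (i : ℕ), by have := i.2; omega⟩ - q)) + q * q := by
      rw [Finset.sum_congr rfl (fun i _ => (Nat.sub_add_cancel (htop i)).symm),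
        Finset.sum_add_distrib, Finset.sum_const, Finset.card_univ, Fintype.card_fin,
        smul_eq_mul]
    have hsq : q ^ 2 = q * q := sq q
    simp only [hg]
    omega
  have h0 : partCountTraceUnbounded p k q = Fintype.card T := by
    rw [partCountTraceUnbounded]
    exact Nat.card_eq_fintype_card
  have hmem : ∀ l : T, l ∈ (Finset.univ : Finset T) → g l ∈ S := by
    intro l _
    have hh := hkey l
    simp only [hg] at hh
    simp only [hS, hg, Finset.mem_filter, Finset.mem_product, Finset.mem_range]
    omega
  rw [h0, ← Finset.card_univ, Finset.card_eq_sum_card_fiberwise hmem]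
  apply Finset.sum_congr rfl
  intro ab hab
  have habp : q ^ 2 + ab.1 + ab.2 = p := (Finset.mem_filter.mp hab).2
  have e := myEquiv k q p ab hqk habp
  calc (Finset.univ.filter (fun l : T => g l = ab)).card
      = Fintype.card {l : T // g l = ab} := (Fintype.card_subtype _).symm
    _ = Nat.card {l : T // g l = ab} := Nat.card_eq_fintype_card.symm
    _ = Nat.card ({l : Fin (k - q) → ℕ // Monotone l ∧ (∀ i, l i ≤ q) ∧ (∑ i, l i) = ab.1} ×
        {l : Fin q → ℕ // Monotone l ∧ (∑ i, l i) = ab.2}) := Nat.card_congr e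
    _ = partCountSize ab.1 (k - q) q * partCountSizeUnbounded ab.2 q := by
        rw [Nat.card_prod, partCountSize, partCountSizeUnbounded]
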